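/- arXiv:0706.0673 — 2 statements merged into one kernel-verified Lean document; each statement's English description precedes it below -/
import Mathlib

section
/- Let ‖·‖ be a seminorm on a finite-dimensional real vector space H that takes integer values on the points of a full lattice L ⊆ H. Then the rational points (points of L ⊗ Q) lying on the boundary of the unit ball B = {c : ‖c‖ ≤ 1} are dense in that boundary, provided the unit ball is compact. -/
/-- Let `N` be a seminorm on `ℝᵐ` taking integer values on the integer lattice, whose
unit ball is compact.  Then the rational points on the boundary of the unit ball are
dense in that boundary. -/
theorem rational_points_dense_in_unit_sphere {m : ℕ}
    (N : Seminorm ℝ (Fin m → ℝ))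
    (hint : ∀ z : Fin m → ℤ, ∃ k : ℤ, N (fun i => (z i : ℝ)) = (k : ℤ))
    (hcpt : IsCompact {c : Fin m → ℝ | N c ≤ 1}) :
    {c : Fin m → ℝ | N c = 1} ⊆
      closure {c : Fin m → ℝ | N c = 1 ∧ ∀ i, ∃ q : ℚ, c i = (q : ℝ)} := by
  classical
  -- a bound N x ≤ C * ‖x‖
  set e : Fin m → (Fin m → ℝ) := fun i j => if i = j then (1:ℝ) else 0 with he
  set C : ℝ := (∑ i, N (e i)) + 1 with hC
  have hC1 : (1:ℝ) ≤ C := by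
    have : (0:ℝ) ≤ ∑ i, N (e i) := Finset.sum_nonneg fun i _ => apply_nonneg N (e i)
    simp [hC]; linarith
  have hCpos : (0:ℝ) < C := lt_of_lt_of_le one_pos hC1
  have hbound : ∀ x : Fin m → ℝ, N x ≤ C * ‖x‖ := by
    intro x
    have hx : x = ∑ i, x i • e i := pi_eq_sum_univ x
    calc N x = N (∑ i, x i • e i) := by rw [← hx]
      _ ≤ ∑ i, N (x i • e i) :=
        Finset.le_sum_of_subadditive N (map_zero N).le (fun a b => map_add_le_add N a b) _ _
      _ ≤ ∑ i, ‖x‖ * N (e i) := by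
        refine Finset.sum_le_sum fun i _ => ?_
        rw [map_smul_eq_mul]
        exact mul_le_mul_of_nonneg_right (norm_le_pi_norm x i) (apply_nonneg N (e i))
      _ = (∑ i, N (e i)) * ‖x‖ := by rw [← Finset.mul_sum]; ring
      _ ≤ C * ‖x‖ := by
        have := norm_nonneg x
        nlinarith [Finset.sum_nonneg fun i (_ : i ∈ Finset.univ) => apply_nonneg N (e i)]
  -- N is rational on rational points
  have hratN : ∀ q : Fin m → ℚ, ∃ ρ : ℚ, N (fun i => (q i : ℝ)) = (ρ : ℝ) := by
    intro q
    set d : ℕ := ∏ i, (q i).den with hd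
    have hdpos : 0 < d := Finset.prod_pos fun i _ => (q i).pos
    set z : Fin m → ℤ := fun i => (q i).num * (d / (q i).den : ℕ) with hz
    have hzq : ∀ i, (z i : ℝ) = (q i : ℝ) * d := by
      intro i
      have hdvd : (q i).den ∣ d := Finset.dvd_prod_of_mem _ (Finset.mem_univ i)
      have h1 : ((d / (q i).den : ℕ) : ℝ) * ((q i).den : ℝ) = (d : ℝ) := by
        rw [← Nat.cast_mul, Nat.div_mul_cancel hdvd]
      have hden : ((q i).den : ℝ) ≠ 0 := Nat.cast_ne_zero.mpr (q i).den_nz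
      have hcast : (q i : ℝ) = ((q i).num : ℝ) / ((q i).den : ℝ) := by
        rw [Rat.cast_def]
      rw [hz]; push_cast
      rw [hcast]
      field_simp
      try nlinarith [h1]
      have h2 : (((d / (q i).den : ℕ) : ℤ) : ℝ) * ((q i).den : ℝ) = (d : ℝ) := by exact_mod_cast h1
      push_cast at h2
      linear_combination ((q i).num : ℝ) * h2
    obtain ⟨k, hk⟩ := hint z
    refine ⟨(k : ℚ) / (d : ℚ), ?_⟩
    have hqz : (fun i => (q i : ℝ)) = ((d : ℝ)⁻¹ • fun i => (z i : ℝ)) := by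
      funext i
      have hdne : (d : ℝ) ≠ 0 := Nat.cast_ne_zero.mpr hdpos.ne'
      simp only [Pi.smul_apply, smul_eq_mul]
      rw [hzq i]; field_simp
    rw [hqz, map_smul_eq_mul, hk]
    have hdne : (d : ℝ) ≠ 0 := Nat.cast_ne_zero.mpr hdpos.ne'
    rw [Real.norm_eq_abs, abs_of_nonneg (inv_nonneg.mpr (Nat.cast_nonneg d))]
    push_cast
    ring
  -- main argument
  intro c hc
  rw [Metric.mem_closure_iff]
  intro ε hε
  set M : ℝ := ‖c‖ + 1 with hM
  have hMpos : (0:ℝ) < M := by positivity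
  set δ : ℝ := min 1 (min (ε/2) (min (1/(2*C)) (ε/(8*C*M)))) with hδ
  have hδpos : 0 < δ := by
    refine lt_min one_pos (lt_min (by positivity) (lt_min (by positivity) (by positivity)))
  have hδ1 : δ ≤ 1 := min_le_left _ _
  have hδε : δ ≤ ε/2 := le_trans (min_le_right _ _) (min_le_left _ _)
  have hδC : C * δ ≤ 1/2 := by
    have : δ ≤ 1/(2*C) := le_trans (min_le_right _ _) (le_trans (min_le_right _ _) (min_le_left _ _))
    rw [div_eq_inv_mul] at this
    calc C * δ ≤ C * ((2*C)⁻¹ * 1) := by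
          apply mul_le_mul_of_nonneg_left _ hCpos.le
          simpa using this
      _ = 1/2 := by field_simp
  have hδCM : 2 * (C * δ) * M ≤ ε/2 := by
    have h : δ ≤ ε/(8*C*M) := le_trans (min_le_right _ _) (le_trans (min_le_right _ _) (min_le_right _ _))
    have : C * δ ≤ C * (ε/(8*C*M)) := mul_le_mul_of_nonneg_left h hCpos.le
    have h2 : C * (ε/(8*C*M)) = ε/(8*M) := by field_simp
    rw [h2] at this
    calc 2 * (C * δ) * M ≤ 2 * (ε/(8*M)) * M := by nlinarith
      _ = ε/4 := by field_simp; ring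
      _ ≤ ε/2 := by linarith
  -- choose a rational point near c
  have hq : ∃ q : Fin m → ℚ, dist (fun i => (q i : ℝ)) c < δ := by
    have : ∀ i, ∃ qi : ℚ, |c i - (qi : ℝ)| < δ/2 := fun i => exists_rat_near (c i) (by positivity)
    choose q hqi using this
    refine ⟨q, ?_⟩
    rw [dist_pi_lt_iff hδpos]
    intro i
    rw [Real.dist_eq]
    calc |(q i : ℝ) - c i| = |c i - (q i : ℝ)| := abs_sub_comm _ _
      _ < δ/2 := hqi i
      _ < δ := by linarith
  obtain ⟨q, hqc⟩ := hq
  set qv : Fin m → ℝ := fun i => (q i : ℝ) with hqv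
  have hNqc : |N qv - 1| ≤ C * δ := by
    have h1 : ‖N qv - N c‖ ≤ N (qv - c) := N.norm_sub_map_le_sub qv c
    have h2 : N (qv - c) ≤ C * ‖qv - c‖ := hbound _
    have h3 : ‖qv - c‖ ≤ δ := by
      rw [← dist_eq_norm]; exact hqc.le
    rw [Real.norm_eq_abs] at h1
    have := mul_le_mul_of_nonneg_left h3 hCpos.le
    rw [hc] at h1
    linarith
  have hr2 : (1:ℝ)/2 ≤ N qv := by
    obtain ⟨h3a, h3b⟩ := abs_le.mp hNqc
    nlinarith [hδC, h3a]
  have hrpos : (0:ℝ) < N qv := lt_of_lt_of_le (by norm_num) hr2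
  obtain ⟨ρ, hρ⟩ := hratN q
  have hρpos : (0:ℚ) < ρ := by
    have : (0:ℝ) < (ρ : ℝ) := hρ ▸ hrpos
    exact_mod_cast this
  set b : Fin m → ℝ := (N qv)⁻¹ • qv with hb
  refine ⟨b, ⟨?_, ?_⟩, ?_⟩
  · rw [hb, map_smul_eq_mul, Real.norm_eq_abs, abs_of_nonneg (inv_nonneg.mpr hrpos.le)]
    field_simp
  · intro i
    refine ⟨ρ⁻¹ * q i, ?_⟩
    rw [hb]
    simp only [Pi.smul_apply, smul_eq_mul]
    rw [hρ]
    push_cast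
    ring
  · have hqnorm : ‖qv‖ ≤ M := by
      have : ‖qv - c‖ ≤ δ := by rw [← dist_eq_norm]; exact hqc.le
      calc ‖qv‖ = ‖c + (qv - c)‖ := by ring_nf
        _ ≤ ‖c‖ + ‖qv - c‖ := norm_add_le _ _
        _ ≤ ‖c‖ + 1 := by linarith
    have hd1 : dist c qv < δ := by rw [dist_comm]; exact hqc
    have hd2 : dist qv b ≤ 2 * (C * δ) * M := by
      have heq : qv - b = (1 - (N qv)⁻¹) • qv := by
        rw [hb]; funext i; simp [sub_mul]
      rw [dist_eq_norm, heq, norm_smul, Real.norm_eq_abs]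
      have habs : |1 - (N qv)⁻¹| ≤ 2 * (C * δ) := by
        rw [abs_sub_comm]
        have h0 : (N qv)⁻¹ - 1 = (1 - N qv) / N qv := by field_simp
        have h1 : |(N qv)⁻¹ - 1| = |N qv - 1| / N qv := by
          rw [h0, abs_div, abs_of_pos hrpos, abs_sub_comm]
        rw [h1, div_le_iff₀ hrpos]
        have hCδnn : 0 ≤ C * δ := by positivity
        nlinarith [abs_nonneg (N qv - 1)]
      have hn : (0:ℝ) ≤ ‖qv‖ := norm_nonneg _
      calc |1 - (N qv)⁻¹| * ‖qv‖ ≤ 2 * (C * δ) * ‖qv‖ :=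
            mul_le_mul_of_nonneg_right habs hn
        _ ≤ 2 * (C * δ) * M := by
            apply mul_le_mul_of_nonneg_left hqnorm
            positivity
    calc dist c b ≤ dist c qv + dist qv b := dist_triangle _ _ _
      _ < δ + 2 * (C * δ) * M := by linarith
      _ ≤ ε/2 + ε/2 := by linarith
      _ = ε := by ring
end

section
/- Let C be a compact convex polytope that is the intersection of the standard simplex Δ ⊆ R^n with a linear subspace, and let v be an extreme point of C with rational coordinates. If x is the minimal positive integral multiple of v and x = Σᵢ xᵢ with each xᵢ ∈ cone(C) ∩ Z^n nonzero, then each xᵢ is a positive rational multiple of v. -/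
/-- Let `C` be the intersection of the standard simplex with a linear subspace, `v` an
extreme point of `C` with rational coordinates, and `x` the minimal positive integral
multiple of `v`.  If `x = Σ xᵢ` with each `xᵢ` a nonzero integral point of the cone
over `C`, then each `xᵢ` is a positive rational multiple of `v`. -/
theorem decomposition_of_minimal_multiple_of_extreme_point {n : ℕ} {ι : Type*}
    [Fintype ι]
    (V : Submodule ℝ (Fin n → ℝ))
    (C : Set (Fin n → ℝ))
    (hC : C = {y | (∀ i, 0 ≤ y i) ∧ ∑ i, y i = 1} ∩ (V : Set (Fin n → ℝ)))
    (v : Fin n → ℝ) (hv : v ∈ Set.extremePoints ℝ C)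
    (hvQ : ∀ i, ∃ q : ℚ, v i = (q : ℝ))
    (t : ℝ) (ht : 0 < t)
    (x : Fin n → ℝ) (hx : x = t • v)
    (hxZ : ∀ i, ∃ z : ℤ, x i = (z : ℝ))
    (hmin : ∀ t' : ℝ, 0 < t' → (∀ i, ∃ z : ℤ, t' * v i = (z : ℝ)) → t ≤ t')
    (xs : ι → (Fin n → ℝ))
    (hxs : ∀ i, xs i ∈ {z | ∃ s : ℝ, 0 ≤ s ∧ ∃ c ∈ C, z = s • c})
    (hxsZ : ∀ i j, ∃ z : ℤ, xs i j = (z : ℝ))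
    (hxsne : ∀ i, xs i ≠ 0)
    (hsum : x = ∑ i, xs i) :
    ∀ i, ∃ c : ℚ, 0 < c ∧ xs i = (c : ℝ) • v := by
  -- C is convex
  have hCconv : Convex ℝ C := by
    rw [hC]
    exact Convex.inter (convex_stdSimplex ℝ (Fin n)) V.convex
  have hvC : v ∈ C := hv.1
  have hvprop : (∀ i, 0 ≤ v i) ∧ ∑ i, v i = 1 := by
    have := hvC; rw [hC] at this; exact this.1
  -- pick s i, c i
  choose s hs0 c hcC hxsc using hxs
  -- s i > 0
  have hspos : ∀ i, 0 < s i := by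
    intro i
    rcases lt_or_eq_of_le (hs0 i) with h | h
    · exact h
    · exfalso; apply hxsne i; rw [hxsc i, ← h, zero_smul]
  -- coordinate sums
  have hcsum : ∀ i, ∑ j, c i j = 1 := by
    intro i
    have := hcC i; rw [hC] at this; exact this.1.2
  have hcnn : ∀ i j, 0 ≤ c i j := by
    intro i; have := hcC i; rw [hC] at this; exact this.1.1
  have hsumcoord : ∀ i, ∑ j, xs i j = s i := by
    intro i
    rw [hxsc i]
    simp only [Pi.smul_apply, smul_eq_mul, ← Finset.mul_sum, hcsum i, mul_one]
  have hst : ∑ i, s i = t := by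
    have h1 : ∑ j, x j = t := by
      rw [hx]; simp [Pi.smul_apply, smul_eq_mul, ← Finset.mul_sum, hvprop.2]
    have h2 : ∑ j, x j = ∑ i, s i := by
      rw [hsum]
      simp only [Finset.sum_apply]
      rw [Finset.sum_comm]
      exact Finset.sum_congr rfl (fun i _ => hsumcoord i)
    linarith
  -- each c i = v
  have hcv : ∀ i, c i = v := by
    classical
    intro i0
    have hle : s i0 ≤ t := by
      rw [← hst]
      exact Finset.single_le_sum (fun j _ => (hspos j).le) (Finset.mem_univ i0)
    rcases lt_or_eq_of_le hle with hlt | heq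
    · -- z = rest / (t - s i0)
      set r : ℝ := t - s i0 with hr
      have hrpos : 0 < r := by linarith
      set z : Fin n → ℝ := r⁻¹ • ∑ j ∈ Finset.univ.erase i0, xs j with hz
      have hrest : ∑ j ∈ Finset.univ.erase i0, s j = r := by
        have := hst
        rw [← Finset.add_sum_erase _ _ (Finset.mem_univ i0)] at this
        linarith
      have hzC : z ∈ C := by
        have : z = ∑ j ∈ Finset.univ.erase i0, (s j / r) • c j := by
          rw [hz, Finset.smul_sum]
          apply Finset.sum_congr rfl
          intro j _
          rw [hxsc j, smul_smul, div_eq_inv_mul]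
        rw [this]
        apply hCconv.sum_mem
        · intro j _; exact div_nonneg (hs0 j) hrpos.le
        · rw [← Finset.sum_div, hrest, div_self hrpos.ne']
        · intro j _; exact hcC j
      -- v ∈ openSegment (c i0) z
      have hseg : v ∈ openSegment ℝ (c i0) z := by
        refine ⟨s i0 / t, r / t, div_pos (hspos i0) ht, div_pos hrpos ht,
          by rw [← add_div, hr]; field_simp; ring, ?_⟩
        funext j
        have h1 : t * v j = xs i0 j + ∑ k ∈ Finset.univ.erase i0, xs k j := by
          have h2 : x j = (∑ k, xs k) j := congrFun hsum j
          simp only [Finset.sum_apply] at h2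
          rw [← Finset.add_sum_erase _ _ (Finset.mem_univ i0)] at h2
          have h3 : x j = t * v j := by rw [hx]; rfl
          linarith
        have h4 : xs i0 j = s i0 * c i0 j := by rw [hxsc i0]; rfl
        have h5 : z j = r⁻¹ * ∑ k ∈ Finset.univ.erase i0, xs k j := by
          rw [hz]; simp [Finset.sum_apply]
        show s i0 / t * c i0 j + r / t * z j = v j
        rw [h5]
        have hS : r / t * (r⁻¹ * ∑ k ∈ Finset.univ.erase i0, xs k j)
            = (∑ k ∈ Finset.univ.erase i0, xs k j) / t := by
          rw [div_mul_eq_mul_div]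
          congr 1
          rw [← mul_assoc, mul_inv_cancel₀ hrpos.ne', one_mul]
        rw [hS, div_mul_eq_mul_div, ← h4, ← add_div, ← h1]
        exact mul_div_cancel_left₀ _ ht.ne'
      exact (hv.2 (hcC i0) hzC hseg)
    · -- s i0 = t: erase sum is 0, so erase set empty, v = c i0
      have hrest : ∑ j ∈ Finset.univ.erase i0, s j = 0 := by
        have := hst
        rw [← Finset.add_sum_erase _ _ (Finset.mem_univ i0)] at this
        linarith
      have hempty : (Finset.univ.erase i0) = ∅ := by
        by_contra h
        rcases Finset.nonempty_iff_ne_empty.mpr h with ⟨j, hj⟩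
        have : 0 < ∑ j ∈ Finset.univ.erase i0, s j :=
          Finset.sum_pos (fun k _ => hspos k) ⟨j, hj⟩
        linarith
      have : x = xs i0 := by
        rw [hsum, ← Finset.add_sum_erase _ _ (Finset.mem_univ i0), hempty]
        simp
      have : t • v = s i0 • c i0 := by rw [← hx, this, hxsc]
      rw [← heq] at this
      have := smul_right_injective (Fin n → ℝ) (hspos i0).ne' this
      exact this.symm
  -- conclude rationality
  intro i
  -- find coordinate with v j ≠ 0
  have : ∃ j, v j ≠ 0 := by
    by_contra h
    push_neg at h
    have := hvprop.2
    rw [Finset.sum_congr rfl (fun j _ => h j)] at this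
    simp at this
  rcases this with ⟨j, hj⟩
  rcases hvQ j with ⟨q, hq⟩
  rcases hxsZ i j with ⟨z, hzz⟩
  have hq0 : (q:ℝ) ≠ 0 := hq ▸ hj
  have hsi : s i = (z : ℝ) / (q : ℝ) := by
    have : xs i j = s i * v j := by rw [hxsc i, hcv i]; rfl
    rw [hzz, hq] at this
    field_simp at this ⊢
    linarith
  refine ⟨(z : ℚ) / q, ?_, ?_⟩
  · have : (0:ℝ) < ((z:ℚ)/q : ℚ) := by push_cast; rw [← hsi]; exact hspos i
    exact_mod_cast this
  · rw [hxsc i, hcv i, hsi]; push_cast; ring_nf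
end
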